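/- Let φ : ℝ^N → ℝ^N be bi-Lipschitz with constant K, let t_j → ∞, and suppose dφ(v) = lim_{j→∞} φ(t_j v)/t_j and dψ(w) = lim_{j→∞} φ^{-1}(t_j w)/t_j exist for all v, w ∈ ℝ^N. Then dψ ∘ dφ = id and dφ ∘ dψ = id; in particular dφ is a bi-Lipschitz homeomorphism of ℝ^N with inverse dψ. -/

import Mathlib

open Set Filter Metric

/-- If `φ : ℝᴺ → ℝᴺ` is bi-Lipschitz with inverse `ψ`, `t_j → ∞`, and the rescalings
`φ(t_j v)/t_j` and `ψ(t_j w)/t_j` converge pointwise to `dφ` and `dψ`, then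
`dψ ∘ dφ = id` and `dφ ∘ dψ = id`; in particular `dφ` is a bi-Lipschitz
homeomorphism with inverse `dψ`. -/
theorem rescaled_limits_are_inverse (N : ℕ) (K : ℝ) (hK : 0 < K)
    (φ ψ : EuclideanSpace ℝ (Fin N) → EuclideanSpace ℝ (Fin N))
    (hφ : ∀ x y, (1 / K) * ‖x - y‖ ≤ ‖φ x - φ y‖ ∧ ‖φ x - φ y‖ ≤ K * ‖x - y‖)
    (hψl : Function.LeftInverse ψ φ) (hψr : Function.RightInverse ψ φ)
    (t : ℕ → ℝ) (ht : ∀ j, 0 < t j) (htop : Tendsto t atTop atTop)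
    (dφ dψ : EuclideanSpace ℝ (Fin N) → EuclideanSpace ℝ (Fin N))
    (hdφ : ∀ v, Tendsto (fun j => (t j)⁻¹ • φ (t j • v)) atTop (nhds (dφ v)))
    (hdψ : ∀ w, Tendsto (fun j => (t j)⁻¹ • ψ (t j • w)) atTop (nhds (dψ w))) :
    dψ ∘ dφ = id ∧ dφ ∘ dψ = id ∧
      ∀ u v, (1 / K) * ‖u - v‖ ≤ ‖dφ u - dφ v‖ ∧ ‖dφ u - dφ v‖ ≤ K * ‖u - v‖ := by
  -- ψ is K-Lipschitz
  have hψLip : ∀ a b, ‖ψ a - ψ b‖ ≤ K * ‖a - b‖ := by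
    intro a b
    have h := (hφ (ψ a) (ψ b)).1
    rw [hψr a, hψr b] at h
    have := mul_le_mul_of_nonneg_left h hK.le
    calc ‖ψ a - ψ b‖ = K * ((1 / K) * ‖ψ a - ψ b‖) := by field_simp
    _ ≤ K * ‖a - b‖ := this
  -- dψ ∘ dφ = id
  have h1 : dψ ∘ dφ = id := by
    funext v
    have key : Tendsto (fun j => (t j)⁻¹ • ψ (t j • dφ v)) atTop (nhds v) := by
      rw [tendsto_iff_norm_sub_tendsto_zero]
      have hb : Tendsto (fun j => K * ‖dφ v - (t j)⁻¹ • φ (t j • v)‖) atTop (nhds 0) := by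
        have : Tendsto (fun j => ‖dφ v - (t j)⁻¹ • φ (t j • v)‖) atTop (nhds 0) := by
          simpa using ((hdφ v).const_sub (dφ v)).norm
        simpa using this.const_mul K
      refine squeeze_zero (fun j => norm_nonneg _) (fun j => ?_) hb
      have htj := (ht j).ne'
      calc ‖(t j)⁻¹ • ψ (t j • dφ v) - v‖
          = ‖(t j)⁻¹ • (ψ (t j • dφ v) - ψ (φ (t j • v)))‖ := by
            rw [hψl, smul_sub, inv_smul_smul₀ htj]
        _ = (t j)⁻¹ * ‖ψ (t j • dφ v) - ψ (φ (t j • v))‖ := by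
            rw [norm_smul, Real.norm_eq_abs, abs_of_pos (inv_pos.mpr (ht j))]
        _ ≤ (t j)⁻¹ * (K * ‖t j • dφ v - φ (t j • v)‖) := by
            exact mul_le_mul_of_nonneg_left (hψLip _ _) (inv_pos.mpr (ht j)).le
        _ = K * ‖dφ v - (t j)⁻¹ • φ (t j • v)‖ := by
            have hx : ‖dφ v - (t j)⁻¹ • φ (t j • v)‖
                = (t j)⁻¹ * ‖t j • dφ v - φ (t j • v)‖ := by
              rw [← norm_smul_of_nonneg (inv_pos.mpr (ht j)).le, smul_sub,
                inv_smul_smul₀ htj]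
            rw [hx]; ring
    exact tendsto_nhds_unique (hdψ (dφ v)) key
  -- dφ ∘ dψ = id
  have h2 : dφ ∘ dψ = id := by
    funext w
    have key : Tendsto (fun j => (t j)⁻¹ • φ (t j • dψ w)) atTop (nhds w) := by
      rw [tendsto_iff_norm_sub_tendsto_zero]
      have hb : Tendsto (fun j => K * ‖dψ w - (t j)⁻¹ • ψ (t j • w)‖) atTop (nhds 0) := by
        have : Tendsto (fun j => ‖dψ w - (t j)⁻¹ • ψ (t j • w)‖) atTop (nhds 0) := by
          simpa using ((hdψ w).const_sub (dψ w)).norm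
        simpa using this.const_mul K
      refine squeeze_zero (fun j => norm_nonneg _) (fun j => ?_) hb
      have htj := (ht j).ne'
      calc ‖(t j)⁻¹ • φ (t j • dψ w) - w‖
          = ‖(t j)⁻¹ • (φ (t j • dψ w) - φ (ψ (t j • w)))‖ := by
            rw [hψr, smul_sub, inv_smul_smul₀ htj]
        _ = (t j)⁻¹ * ‖φ (t j • dψ w) - φ (ψ (t j • w))‖ := by
            rw [norm_smul, Real.norm_eq_abs, abs_of_pos (inv_pos.mpr (ht j))]
        _ ≤ (t j)⁻¹ * (K * ‖t j • dψ w - ψ (t j • w)‖) := by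
            exact mul_le_mul_of_nonneg_left (hφ _ _).2 (inv_pos.mpr (ht j)).le
        _ = K * ‖dψ w - (t j)⁻¹ • ψ (t j • w)‖ := by
            have hx : ‖dψ w - (t j)⁻¹ • ψ (t j • w)‖
                = (t j)⁻¹ * ‖t j • dψ w - ψ (t j • w)‖ := by
              rw [← norm_smul_of_nonneg (inv_pos.mpr (ht j)).le, smul_sub,
                inv_smul_smul₀ htj]
            rw [hx]; ring
    exact tendsto_nhds_unique (hdφ (dψ w)) key
  refine ⟨h1, h2, fun u v => ?_⟩
  have hlim : Tendsto (fun j => ‖(t j)⁻¹ • φ (t j • u) - (t j)⁻¹ • φ (t j • v)‖)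
      atTop (nhds ‖dφ u - dφ v‖) := ((hdφ u).sub (hdφ v)).norm
  have heq : ∀ j, ‖(t j)⁻¹ • φ (t j • u) - (t j)⁻¹ • φ (t j • v)‖
      = (t j)⁻¹ * ‖φ (t j • u) - φ (t j • v)‖ := by
    intro j
    rw [← smul_sub, norm_smul, Real.norm_eq_abs, abs_of_pos (inv_pos.mpr (ht j))]
  have hnorm : ∀ j, ‖t j • u - t j • v‖ = t j * ‖u - v‖ := by
    intro j
    rw [← smul_sub, norm_smul, Real.norm_eq_abs, abs_of_pos (ht j)]
  constructor
  · refine ge_of_tendsto' hlim (fun j => ?_)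
    have h := (hφ (t j • u) (t j • v)).1
    rw [hnorm j] at h
    rw [heq j]
    have := mul_le_mul_of_nonneg_left h (inv_pos.mpr (ht j)).le
    calc (1 / K) * ‖u - v‖ = (t j)⁻¹ * ((1 / K) * (t j * ‖u - v‖)) := by
          field_simp [(ht j).ne', hK.ne']
      _ ≤ (t j)⁻¹ * ‖φ (t j • u) - φ (t j • v)‖ := this
  · refine le_of_tendsto' hlim (fun j => ?_)
    have h := (hφ (t j • u) (t j • v)).2
    rw [hnorm j] at h
    rw [heq j]
    have := mul_le_mul_of_nonneg_left h (inv_pos.mpr (ht j)).le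
    calc (t j)⁻¹ * ‖φ (t j • u) - φ (t j • v)‖ ≤ (t j)⁻¹ * (K * (t j * ‖u - v‖)) := this
      _ = K * ‖u - v‖ := by field_simp [(ht j).ne']
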